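/- Let q ∈ (0,1) with q > 1/2, and let p ∈ Δ_2 with p_1 = p_2. Then G^n(p) converges to ((2q−1)/(4q−1), (2q−1)/(4q−1), 1/(4q−1)) as n → ∞. -/
import Mathlib


open Filter Topology

/-- The map G = (G₁,G₂,G₃) on ℝ³ (with parameter q):
G₁(x) = x₁² + 2q x₁ x₃, G₂(x) = x₂² + 2q x₂ x₃,
G₃(x) = x₃² + 2 x₁ x₂ + 2(1−q) x₁ x₃ + 2(1−q) x₂ x₃. -/
noncomputable def Gmap (q : ℝ) (x : ℝ × ℝ × ℝ) : ℝ × ℝ × ℝ :=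
  (x.1 ^ 2 + 2 * q * x.1 * x.2.2,
   x.2.1 ^ 2 + 2 * q * x.2.1 * x.2.2,
   x.2.2 ^ 2 + 2 * x.1 * x.2.1 + 2 * (1 - q) * x.1 * x.2.2
     + 2 * (1 - q) * x.2.1 * x.2.2)

/-- The open simplex Δ₂ ⊆ ℝ³. -/
def simplex2 : Set (ℝ × ℝ × ℝ) :=
  {p | p.1 + p.2.1 + p.2.2 = 1 ∧ 0 < p.1 ∧ 0 < p.2.1 ∧ 0 < p.2.2}

/-- If q > 1/2 and p₁ = p₂, then
G^n(p) → ((2q−1)/(4q−1), (2q−1)/(4q−1), 1/(4q−1)). -/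
theorem tendsto_symmetric_fixed_point (q : ℝ) (hq0 : 0 < q) (hq1 : q < 1)
    (hq : 1 / 2 < q) (p : ℝ × ℝ × ℝ) (hp : p ∈ simplex2) (h12 : p.1 = p.2.1) :
    Tendsto (fun n => (Gmap q)^[n] p) atTop
      (𝓝 ((2 * q - 1) / (4 * q - 1), (2 * q - 1) / (4 * q - 1),
          1 / (4 * q - 1))) := by
  obtain ⟨hsum, hp1, hp2, hp3⟩ := hp
  have ha : (0:ℝ) < 4*q-1 := by linarith
  set f : ℝ → ℝ := fun x => 2*q*x - (4*q-1)*x^2 with hf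
  set u : ℕ → ℝ := fun n => f^[n] p.1 with hu
  set s : ℝ := (2*q-1)/(4*q-1) with hs
  have hs_pos : 0 < s := div_pos (by linarith) ha
  have hsa : s * (4*q-1) = 2*q-1 := div_mul_cancel₀ _ (ne_of_gt ha)
  clear_value s
  have hu0' : p.1 < 1/2 := by
    have h21 : p.2.1 = p.1 := h12.symm
    linarith
  set δ : ℝ := min p.1 (min s (1/8)) with hδ
  have hδ0 : 0 < δ := lt_min hp1 (lt_min hs_pos (by norm_num))
  have hδ8 : δ ≤ 1/8 := le_trans (min_le_right _ _) (min_le_right _ _)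
  have hδs : δ ≤ s := le_trans (min_le_right _ _) (min_le_left _ _)
  have hδp : δ ≤ p.1 := min_le_left _ _
  have hδa : δ * (4*q-1) ≤ 2*q-1 := by
    calc δ * (4*q-1) ≤ s * (4*q-1) := by nlinarith
    _ = 2*q-1 := hsa
  -- invariance of [δ, 1/2]
  have hstep : ∀ x : ℝ, δ ≤ x → x ≤ 1/2 → δ ≤ f x ∧ f x ≤ 1/2 := by
    intro x hx1 hx2
    constructor
    · rcases le_or_gt 0 (2*q - (4*q-1)*(x+δ)) with h | h
      · -- f x ≥ f δ ≥ δ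
        have h1 : (x - δ) * (2*q - (4*q-1)*(x+δ)) ≥ 0 :=
          mul_nonneg (by linarith) h
        have h2 : δ * ((2*q-1) - (4*q-1)*δ) ≥ 0 :=
          mul_nonneg hδ0.le (by nlinarith)
        simp only [hf]
        nlinarith [h1, h2]
      · -- f x ≥ f (1/2) = 1/4 ≥ δ
        have h1 : (1/2 - x) * ((4*q-1)*(x+1/2) - 2*q) ≥ 0 := by
          apply mul_nonneg (by linarith)
          nlinarith
        simp only [hf]
        nlinarith [h1]
    · simp only [hf]
      nlinarith [sq_nonneg ((4*q-1)*x - q), mul_pos (sub_pos.2 hq) (sub_pos.2 hq1)]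
  have hinv : ∀ n, δ ≤ u n ∧ u n ≤ 1/2 := by
    intro n
    induction n with
    | zero => exact ⟨hδp, hu0'.le⟩
    | succ n ih =>
        have : u (n+1) = f (u n) := by
          simp only [hu, Function.iterate_succ_apply']
        rw [this]
        exact hstep _ ih.1 ih.2
  set L : ℝ := 1 - (4*q-1)*δ with hL
  have hq3 : 4*q-1 ≤ 3 := by linarith
  have h38 : (4*q-1)*δ ≤ 3 * (1/8) := mul_le_mul hq3 hδ8 hδ0.le (by norm_num)
  have hL0 : 0 < L := by rw [hL]; linarith
  have hL1 : L < 1 := by have := mul_pos ha hδ0; rw [hL]; linarith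
  have hfac : ∀ x : ℝ, δ ≤ x → x ≤ 1/2 → |1 - (4*q-1)*x| ≤ L := by
    intro x hx1 hx2
    have hx0 : 0 ≤ x := hδ0.le.trans hx1
    have h1 : (4*q-1)*x ≤ 3 * (1/2) := mul_le_mul hq3 hx2 hx0 (by norm_num)
    have h2 : (4*q-1)*δ ≤ (4*q-1)*x := mul_le_mul_of_nonneg_left hx1 ha.le
    rw [abs_le, hL]
    constructor
    · linarith
    · linarith
  have hkey : ∀ n, |u n - s| ≤ L^n * |p.1 - s| := by
    intro n
    induction n with
    | zero => simp [hu]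
    | succ n ih =>
        have hn : u (n+1) = f (u n) := by
          simp only [hu, Function.iterate_succ_apply']
        have hfs : f (u n) - s = (u n - s) * (1 - (4*q-1) * u n) := by
          simp only [hf]
          linear_combination (-(u n)) * hsa
        rw [hn, hfs, abs_mul, pow_succ]
        obtain ⟨h1, h2⟩ := hinv n
        calc |u n - s| * |1 - (4*q-1) * u n|
            ≤ (L^n * |p.1 - s|) * L :=
              mul_le_mul ih (hfac _ h1 h2) (abs_nonneg _)
                (by positivity)
        _ = L^n * L * |p.1 - s| := by ring
  have htend : Tendsto u atTop (𝓝 s) := by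
    rw [tendsto_iff_dist_tendsto_zero]
    have hgeo : Tendsto (fun n : ℕ => L^n * |p.1 - s|) atTop (𝓝 0) := by
      simpa using (tendsto_pow_atTop_nhds_zero_of_lt_one hL0.le hL1).mul_const |p.1 - s|
    apply squeeze_zero (fun n => dist_nonneg) _ hgeo
    intro n
    rw [Real.dist_eq]
    exact hkey n
  have hiter : ∀ n, (Gmap q)^[n] p = (u n, u n, 1 - 2 * u n) := by
    intro n
    induction n with
    | zero =>
        have hp22 : p.2.2 = 1 - 2 * p.1 := by
          have h21 : p.2.1 = p.1 := h12.symm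
          linarith
        simp only [Function.iterate_zero_apply, hu]
        exact Prod.ext rfl (Prod.ext h12.symm hp22)
    | succ n ih =>
        rw [Function.iterate_succ_apply', ih]
        have hn : u (n+1) = f (u n) := by
          simp only [hu, Function.iterate_succ_apply']
        rw [hn]
        simp only [Gmap, hf]
        refine Prod.ext ?_ (Prod.ext ?_ ?_) <;> simp <;> ring
  have hgoal2 : 1 / (4*q-1) = 1 - 2 * s := by
    rw [hs]; field_simp; ring
  simp only [hiter]
  rw [hgoal2]
  exact htend.prodMk_nhds (htend.prodMk_nhds
    (tendsto_const_nhds.sub (htend.const_mul 2)))
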